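/- Let $A$, $B$, $C$ be points on the unit circle and $\lambda \in [0,2]$. Then there exists a point $M$ on the unit circle such that $MA^{\lambda} + MB^{\lambda} + MC^{\lambda} \ge 2 + 2^{\lambda}$. -/

import Mathlib

open Real RealInnerProductSpace

/-- Core trig estimate at the midpoint of the largest gap. -/
private lemma lemP (h x : ℝ) (h1 : π/3 ≤ h) (h2 : h ≤ π)
    (h3 : |x| ≤ 3*h - π) (h4 : |x| ≤ π - h) :
    Real.cos h ≤ 1/2 ∧ 0 ≤ Real.cos x ∧ 2 * Real.cos h ≤ Real.cos x := by
  have pip := Real.pi_pos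
  have habs : 0 ≤ |x| := abs_nonneg x
  have hx0 : |x| ≤ π/2 := by
    rcases le_total h (π/2) with hh | hh
    · linarith
    · linarith
  have hcosx0 : 0 ≤ Real.cos x := by
    rw [← Real.cos_abs]
    exact Real.cos_nonneg_of_mem_Icc ⟨by linarith, hx0⟩
  have hcosh : Real.cos h ≤ 1/2 := by
    have := Real.cos_le_cos_of_nonneg_of_le_pi (by positivity) h2 h1
    rwa [Real.cos_pi_div_three] at this
  refine ⟨hcosh, hcosx0, ?_⟩
  rcases le_total h (π/2) with hh | hh
  · have hch0 : 0 ≤ Real.cos h := Real.cos_nonneg_of_mem_Icc ⟨by linarith, hh⟩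
    have hc1 : Real.cos (3*h - π) ≤ Real.cos x := by
      rw [← Real.cos_abs x]
      exact Real.cos_le_cos_of_nonneg_of_le_pi habs (by linarith) h3
    have hc2 : Real.cos (3*h - π) = -Real.cos (3*h) := by
      rw [show 3*h - π = -(π - 3*h) by ring, Real.cos_neg, Real.cos_pi_sub]
    have hc3 := Real.cos_three_mul h
    have hprod : 0 ≤ Real.cos h * ((1 - 2*Real.cos h) * (1 + 2*Real.cos h)) :=
      mul_nonneg hch0 (mul_nonneg (by linarith) (by linarith))
    nlinarith [hprod, hc1, hc2, hc3]
  · have : Real.cos h ≤ 0 := Real.cos_nonpos_of_pi_div_two_le_of_le hh (by linarith)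
    linarith

private lemma caseA (b c : ℝ) (hb : 0 ≤ b) (hbc : b ≤ c) (hc : c ≤ 2*π)
    (d1 : b ≤ 2*π - c) (d2 : c - b ≤ 2*π - c) :
    ∃ θ : ℝ, Real.cos θ ≤ 1/2 ∧ Real.cos (θ - b) ≤ 1/2 ∧ Real.cos (θ - c) ≤ 1/2 ∧
      Real.cos θ + Real.cos (θ - b) + Real.cos (θ - c) ≤ 0 := by
  have pip := Real.pi_pos
  set h : ℝ := π - c/2 with hdef
  set x : ℝ := c/2 - b with xdef
  obtain ⟨p1, p2, p3⟩ := lemP h x (by simp only [hdef]; linarith) (by simp only [hdef]; linarith)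
    (abs_le.mpr ⟨by simp only [hdef, xdef]; linarith, by simp only [hdef, xdef]; linarith⟩)
    (abs_le.mpr ⟨by simp only [hdef, xdef]; linarith, by simp only [hdef, xdef]; linarith⟩)
  have e1 : Real.cos (π + c/2) = Real.cos h := by
    rw [show π + c/2 = 2*π - h by rw [hdef]; ring, Real.cos_two_pi_sub]
  have e2 : Real.cos (π + c/2 - b) = -Real.cos x := by
    rw [show π + c/2 - b = x + π by rw [xdef]; ring, Real.cos_add_pi]
  have e3 : Real.cos (π + c/2 - c) = Real.cos h := by
    rw [show π + c/2 - c = h by rw [hdef]; ring]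
  exact ⟨π + c/2, by rw [e1]; linarith, by rw [e2]; linarith, by rw [e3]; linarith,
    by rw [e1, e2, e3]; linarith⟩

private lemma caseB (b c : ℝ) (hb : 0 ≤ b) (hbc : b ≤ c) (hc : c ≤ 2*π)
    (d1 : c - b ≤ b) (d2 : 2*π - c ≤ b) :
    ∃ θ : ℝ, Real.cos θ ≤ 1/2 ∧ Real.cos (θ - b) ≤ 1/2 ∧ Real.cos (θ - c) ≤ 1/2 ∧
      Real.cos θ + Real.cos (θ - b) + Real.cos (θ - c) ≤ 0 := by
  have pip := Real.pi_pos
  set h : ℝ := b/2 with hdef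
  set x : ℝ := π + b/2 - c with xdef
  obtain ⟨p1, p2, p3⟩ := lemP h x (by simp only [hdef]; linarith) (by simp only [hdef]; linarith)
    (abs_le.mpr ⟨by simp only [hdef, xdef]; linarith, by simp only [hdef, xdef]; linarith⟩)
    (abs_le.mpr ⟨by simp only [hdef, xdef]; linarith, by simp only [hdef, xdef]; linarith⟩)
  have e1 : Real.cos (b/2) = Real.cos h := by rw [hdef]
  have e2 : Real.cos (b/2 - b) = Real.cos h := by
    rw [show b/2 - b = -h by rw [hdef]; ring, Real.cos_neg]
  have e3 : Real.cos (b/2 - c) = -Real.cos x := by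
    rw [show b/2 - c = -(π - x) by rw [xdef]; ring, Real.cos_neg, Real.cos_pi_sub]
  exact ⟨b/2, by rw [e1]; linarith, by rw [e2]; linarith, by rw [e3]; linarith,
    by rw [e1, e2, e3]; linarith⟩

private lemma caseC (b c : ℝ) (hb : 0 ≤ b) (hbc : b ≤ c) (hc : c ≤ 2*π)
    (d1 : b ≤ c - b) (d2 : 2*π - c ≤ c - b) :
    ∃ θ : ℝ, Real.cos θ ≤ 1/2 ∧ Real.cos (θ - b) ≤ 1/2 ∧ Real.cos (θ - c) ≤ 1/2 ∧
      Real.cos θ + Real.cos (θ - b) + Real.cos (θ - c) ≤ 0 := by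
  have pip := Real.pi_pos
  set h : ℝ := (c - b)/2 with hdef
  set x : ℝ := (b + c)/2 - π with xdef
  obtain ⟨p1, p2, p3⟩ := lemP h x (by simp only [hdef]; linarith) (by simp only [hdef]; linarith)
    (abs_le.mpr ⟨by simp only [hdef, xdef]; linarith, by simp only [hdef, xdef]; linarith⟩)
    (abs_le.mpr ⟨by simp only [hdef, xdef]; linarith, by simp only [hdef, xdef]; linarith⟩)
  have e1 : Real.cos ((b + c)/2) = -Real.cos x := by
    rw [show (b + c)/2 = x + π by rw [xdef]; ring, Real.cos_add_pi]
  have e2 : Real.cos ((b + c)/2 - b) = Real.cos h := by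
    rw [show (b + c)/2 - b = h by rw [hdef]; ring]
  have e3 : Real.cos ((b + c)/2 - c) = Real.cos h := by
    rw [show (b + c)/2 - c = -h by rw [hdef]; ring, Real.cos_neg]
  exact ⟨(b + c)/2, by rw [e1]; linarith, by rw [e2]; linarith, by rw [e3]; linarith,
    by rw [e1, e2, e3]; linarith⟩

/-- Sorted, normalized version. -/
private lemma lemT (b c : ℝ) (hb : 0 ≤ b) (hbc : b ≤ c) (hc : c ≤ 2*π) :
    ∃ θ : ℝ, Real.cos θ ≤ 1/2 ∧ Real.cos (θ - b) ≤ 1/2 ∧ Real.cos (θ - c) ≤ 1/2 ∧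
      Real.cos θ + Real.cos (θ - b) + Real.cos (θ - c) ≤ 0 := by
  rcases le_total b (c - b) with h12 | h12 <;>
    rcases le_total b (2*π - c) with h13 | h13 <;>
      rcases le_total (c - b) (2*π - c) with h23 | h23
  · exact caseA b c hb hbc hc (by linarith) (by linarith)
  · exact caseC b c hb hbc hc (by linarith) (by linarith)
  · exact caseA b c hb hbc hc (by linarith) (by linarith)
  · exact caseC b c hb hbc hc (by linarith) (by linarith)
  · exact caseA b c hb hbc hc (by linarith) (by linarith)
  · exact caseB b c hb hbc hc (by linarith) (by linarith)
  · exact caseB b c hb hbc hc (by linarith) (by linarith)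
  · exact caseB b c hb hbc hc (by linarith) (by linarith)

/-- Reduce a real to `[0, 2π)` preserving cosine differences. -/
private lemma lemT0 (b c : ℝ) :
    ∃ θ : ℝ, Real.cos θ ≤ 1/2 ∧ Real.cos (θ - b) ≤ 1/2 ∧ Real.cos (θ - c) ≤ 1/2 ∧
      Real.cos θ + Real.cos (θ - b) + Real.cos (θ - c) ≤ 0 := by
  have pip := Real.pi_pos
  have twopip : 0 < 2*π := by linarith
  set b' : ℝ := b - (⌊b/(2*π)⌋ : ℤ) * (2*π) with hb'def
  set c' : ℝ := c - (⌊c/(2*π)⌋ : ℤ) * (2*π) with hc'def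
  have hb0 : 0 ≤ b' := by
    have := Int.floor_le (b/(2*π))
    have h2 : (⌊b/(2*π)⌋ : ℝ) * (2*π) ≤ (b/(2*π)) * (2*π) :=
      mul_le_mul_of_nonneg_right this (le_of_lt twopip)
    rw [div_mul_cancel₀ _ (ne_of_gt twopip)] at h2
    simp only [hb'def]; linarith
  have hb1 : b' ≤ 2*π := by
    have := Int.lt_floor_add_one (b/(2*π))
    have h2 : (b/(2*π)) * (2*π) ≤ ((⌊b/(2*π)⌋ : ℝ) + 1) * (2*π) :=
      mul_le_mul_of_nonneg_right (le_of_lt this) (le_of_lt twopip)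
    rw [div_mul_cancel₀ _ (ne_of_gt twopip)] at h2
    simp only [hb'def]; linarith
  have hc0 : 0 ≤ c' := by
    have := Int.floor_le (c/(2*π))
    have h2 : (⌊c/(2*π)⌋ : ℝ) * (2*π) ≤ (c/(2*π)) * (2*π) :=
      mul_le_mul_of_nonneg_right this (le_of_lt twopip)
    rw [div_mul_cancel₀ _ (ne_of_gt twopip)] at h2
    simp only [hc'def]; linarith
  have hc1 : c' ≤ 2*π := by
    have := Int.lt_floor_add_one (c/(2*π))
    have h2 : (c/(2*π)) * (2*π) ≤ ((⌊c/(2*π)⌋ : ℝ) + 1) * (2*π) :=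
      mul_le_mul_of_nonneg_right (le_of_lt this) (le_of_lt twopip)
    rw [div_mul_cancel₀ _ (ne_of_gt twopip)] at h2
    simp only [hc'def]; linarith
  have keyb : ∀ θ : ℝ, Real.cos (θ - b) = Real.cos (θ - b') := by
    intro θ
    rw [show θ - b = (θ - b') - (⌊b/(2*π)⌋ : ℤ) * (2*π) by simp only [hb'def]; ring]
    exact Real.cos_sub_int_mul_two_pi _ _
  have keyc : ∀ θ : ℝ, Real.cos (θ - c) = Real.cos (θ - c') := by
    intro θ
    rw [show θ - c = (θ - c') - (⌊c/(2*π)⌋ : ℤ) * (2*π) by simp only [hc'def]; ring]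
    exact Real.cos_sub_int_mul_two_pi _ _
  rcases le_total b' c' with hbc | hbc
  · obtain ⟨θ, h1, h2, h3, h4⟩ := lemT b' c' hb0 hbc hc1
    exact ⟨θ, h1, by rw [keyb]; exact h2, by rw [keyc]; exact h3,
      by rw [keyb, keyc]; exact h4⟩
  · obtain ⟨θ, h1, h2, h3, h4⟩ := lemT c' b' hc0 hbc hb1
    exact ⟨θ, h1, by rw [keyb]; exact h3, by rw [keyc]; exact h2,
      by rw [keyb, keyc]; linarith⟩

/-- Full trig claim for arbitrary angles. -/
private lemma lemT' (a b c : ℝ) :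
    ∃ θ : ℝ, Real.cos (θ - a) ≤ 1/2 ∧ Real.cos (θ - b) ≤ 1/2 ∧ Real.cos (θ - c) ≤ 1/2 ∧
      Real.cos (θ - a) + Real.cos (θ - b) + Real.cos (θ - c) ≤ 0 := by
  obtain ⟨θ, h1, h2, h3, h4⟩ := lemT0 (b - a) (c - a)
  refine ⟨θ + a, ?_, ?_, ?_, ?_⟩
  · rw [show θ + a - a = θ by ring]; exact h1
  · rw [show θ + a - b = θ - (b - a) by ring]; exact h2
  · rw [show θ + a - c = θ - (c - a) by ring]; exact h3
  · rw [show θ + a - a = θ by ring, show θ + a - b = θ - (b - a) by ring,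
      show θ + a - c = θ - (c - a) by ring]; exact h4

/-- Representation of a unit vector in `ℝ²` by an angle. -/
private lemma rep (A : EuclideanSpace ℝ (Fin 2)) (h : ‖A‖ = 1) :
    ∃ a : ℝ, A 0 = Real.cos a ∧ A 1 = Real.sin a := by
  have hsum : A 0 ^ 2 + A 1 ^ 2 = 1 := by
    have h1 := EuclideanSpace.norm_eq A
    rw [h] at h1
    have h2 : (1:ℝ)^2 = (Real.sqrt (∑ i, ‖A i‖ ^ 2))^2 := by rw [h1]
    rw [Real.sq_sqrt (by positivity)] at h2
    simpa [Fin.sum_univ_two, Real.norm_eq_abs, sq_abs] using h2.symm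
  have hA0 : -1 ≤ A 0 ∧ A 0 ≤ 1 := by constructor <;> nlinarith [sq_nonneg (A 1)]
  rcases le_total 0 (A 1) with hs | hs
  · refine ⟨Real.arccos (A 0), (Real.cos_arccos hA0.1 hA0.2).symm, ?_⟩
    rw [Real.sin_arccos]
    rw [show 1 - A 0 ^ 2 = A 1 ^ 2 by linarith]
    rw [Real.sqrt_sq hs]
  · refine ⟨-Real.arccos (A 0), ?_, ?_⟩
    · rw [Real.cos_neg, Real.cos_arccos hA0.1 hA0.2]
    · rw [Real.sin_neg, Real.sin_arccos]
      rw [show 1 - A 0 ^ 2 = A 1 ^ 2 by linarith]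
      rw [Real.sqrt_sq_eq_abs, abs_of_nonpos hs]
      ring

/-- Chord bound from concavity: per-point estimate. -/
private lemma keylem (lam : ℝ) (h0 : 0 ≤ lam) (h2 : lam ≤ 2) (t : ℝ)
    (ht1 : -1 ≤ t) (ht2 : t ≤ 1/2) (d : ℝ) (hd : 0 ≤ d) (hdsq : d^2 = 2 - 2*t) :
    (2 + 2*t)/3 + (1 - 2*t)/3 * (2:ℝ)^lam ≤ d ^ lam := by
  set μ : ℝ := lam/2 with hμdef
  have hμ0 : 0 ≤ μ := by simp only [hμdef]; linarith
  have hμ1 : μ ≤ 1 := by simp only [hμdef]; linarith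
  have hy1 : 1 ≤ d^2 := by linarith
  have hy4 : d^2 ≤ 4 := by linarith
  have hd1 : d ^ lam = (d^2) ^ μ := by
    rw [← Real.rpow_natCast d 2, ← Real.rpow_mul hd]
    rw [hμdef]; push_cast; ring_nf
  have h4 : (4:ℝ) ^ μ = (2:ℝ) ^ lam := by
    rw [show (4:ℝ) = (2:ℝ)^(2:ℕ) by norm_num, ← Real.rpow_natCast 2 2,
      ← Real.rpow_mul (by norm_num : (0:ℝ) ≤ 2)]
    rw [hμdef]; push_cast; ring_nf
  have hcon := (Real.concaveOn_rpow hμ0 hμ1).2 (Set.mem_Ici.mpr (by norm_num : (0:ℝ) ≤ 1))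
    (Set.mem_Ici.mpr (by norm_num : (0:ℝ) ≤ 4))
    (show (0:ℝ) ≤ (4 - d^2)/3 by linarith) (show (0:ℝ) ≤ (d^2 - 1)/3 by linarith)
    (show (4 - d^2)/3 + (d^2 - 1)/3 = 1 by ring)
  have hcon' : (4 - d^2)/3 * 1 + (d^2 - 1)/3 * (4:ℝ)^μ
      ≤ ((4 - d^2)/3 * 1 + (d^2 - 1)/3 * 4) ^ μ := by
    simpa [smul_eq_mul, Real.one_rpow] using hcon
  have harg : (4 - d^2)/3 * 1 + (d^2 - 1)/3 * 4 = d^2 := by ring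
  rw [harg] at hcon'
  rw [hd1, ← h4]
  have ht' : t = (2 - d^2)/2 := by linarith
  rw [ht']
  linarith [hcon']

theorem stmt_4 (A B C : EuclideanSpace ℝ (Fin 2))
    (hA : A ∈ Metric.sphere (0 : EuclideanSpace ℝ (Fin 2)) 1)
    (hB : B ∈ Metric.sphere (0 : EuclideanSpace ℝ (Fin 2)) 1)
    (hC : C ∈ Metric.sphere (0 : EuclideanSpace ℝ (Fin 2)) 1)
    (lam : ℝ) (hlam0 : 0 ≤ lam) (hlam2 : lam ≤ 2) :
    ∃ M ∈ Metric.sphere (0 : EuclideanSpace ℝ (Fin 2)) 1,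
      2 + (2 : ℝ) ^ lam ≤ dist M A ^ lam + dist M B ^ lam + dist M C ^ lam := by
  rw [mem_sphere_zero_iff_norm] at hA hB hC
  obtain ⟨a, ha0, ha1⟩ := rep A hA
  obtain ⟨b, hb0, hb1⟩ := rep B hB
  obtain ⟨c, hc0, hc1⟩ := rep C hC
  obtain ⟨θ, k1, k2, k3, k4⟩ := lemT' a b c
  set M : EuclideanSpace ℝ (Fin 2) :=
    (WithLp.equiv 2 (Fin 2 → ℝ)).symm ![Real.cos θ, Real.sin θ] with hMdef
  have hM0 : M 0 = Real.cos θ := rfl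
  have hM1 : M 1 = Real.sin θ := rfl
  have hMnorm : ‖M‖ = 1 := by
    rw [EuclideanSpace.norm_eq]
    simp only [Fin.sum_univ_two, hM0, hM1, Real.norm_eq_abs, sq_abs]
    rw [Real.cos_sq_add_sin_sq, Real.sqrt_one]
  have inner_eq : ∀ (P : EuclideanSpace ℝ (Fin 2)) (p : ℝ), P 0 = Real.cos p →
      P 1 = Real.sin p → (inner ℝ M P : ℝ) = Real.cos (θ - p) := by
    intro P p hp0 hp1
    rw [PiLp.inner_apply]
    simp only [RCLike.inner_apply, starRingEnd_apply, star_trivial, Fin.sum_univ_two,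
      hM0, hM1, hp0, hp1]
    rw [Real.cos_sub]
    all_goals ring
  have hiA := inner_eq A a ha0 ha1
  have hiB := inner_eq B b hb0 hb1
  have hiC := inner_eq C c hc0 hc1
  have distsq : ∀ (P : EuclideanSpace ℝ (Fin 2)), ‖P‖ = 1 →
      dist M P ^ 2 = 2 - 2 * (inner ℝ M P : ℝ) := by
    intro P hP
    rw [dist_eq_norm, norm_sub_sq_real, hMnorm, hP]
    ring
  have innb : ∀ (P : EuclideanSpace ℝ (Fin 2)), ‖P‖ = 1 → -1 ≤ (inner ℝ M P : ℝ) := by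
    intro P hP
    have h1 := abs_real_inner_le_norm M P
    rw [hMnorm, hP, one_mul] at h1
    exact (abs_le.mp h1).1
  have bA := keylem lam hlam0 hlam2 ((inner ℝ M A : ℝ)) (innb A hA) (by rw [hiA]; linarith)
    (dist M A) dist_nonneg (distsq A hA)
  have bB := keylem lam hlam0 hlam2 ((inner ℝ M B : ℝ)) (innb B hB) (by rw [hiB]; linarith)
    (dist M B) dist_nonneg (distsq B hB)
  have bC := keylem lam hlam0 hlam2 ((inner ℝ M C : ℝ)) (innb C hC) (by rw [hiC]; linarith)
    (dist M C) dist_nonneg (distsq C hC)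
  have hTsum : (inner ℝ M A : ℝ) + (inner ℝ M B : ℝ) + (inner ℝ M C : ℝ) ≤ 0 := by
    rw [hiA, hiB, hiC]; linarith
  have hP1 : (1:ℝ) ≤ (2:ℝ) ^ lam := by
    have := Real.rpow_le_rpow_of_exponent_le (by norm_num : (1:ℝ) ≤ 2) hlam0
    rwa [Real.rpow_zero] at this
  refine ⟨M, mem_sphere_zero_iff_norm.mpr hMnorm, ?_⟩
  nlinarith [mul_nonneg (neg_nonneg.mpr hTsum) (sub_nonneg.mpr hP1), bA, bB, bC]
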